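/- For n ≥ 3, the inverse of the circulant matrix P = circ(P₁, ..., Pₙ) over ℚ is the circulant matrix circ(p₁, p₂, ..., pₙ) where p₁ = (1/gₙ)(1 + 2Pₙ^{n-3}/(P₁-Pₙ₊₁)^{n-2} + Σ_{k=1}^{n-3} P_{n-k}Pₙ^{k-1}/(P₁-Pₙ₊₁)^k), p₂ = (1/gₙ)(-2 + Σ_{k=1}^{n-2} P_{n-k-1}Pₙ^{k-1}/(P₁-Pₙ₊₁)^k), and p_i = -Pₙ^{i-3}/(gₙ (P₁-Pₙ₊₁)^{i-2}) for 3 ≤ i ≤ n, with gₙ = P₁ - 2Pₙ + Σ_{k=2}^{n-1} P_{k-1}(Pₙ/(P₁-Pₙ₊₁))^{n-k}. -/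

import Mathlib

def pell : ℕ → ℚ
  | 0 => 0
  | 1 => 1
  | n + 2 => 2 * pell (n + 1) + pell n

lemma pell_two_step (m : ℕ) : pell (m + 2) = 2 * pell (m + 1) + pell m := rfl

lemma pell_nonneg : ∀ m, 0 ≤ pell m
  | 0 => le_refl 0
  | 1 => by norm_num [pell]
  | (m+2) => by
      have h1 := pell_nonneg (m+1)
      have h2 := pell_nonneg m
      rw [pell_two_step]; linarith

lemma pell_one_le : ∀ m, 1 ≤ pell (m+1)
  | 0 => by norm_num [pell]
  | (m+1) => by
      have h1 := pell_one_le m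
      have h2 := pell_nonneg m
      rw [pell_two_step]; linarith

lemma sumB (α β : ℚ) : ∀ M : ℕ,
    (β^2 + 2*α*β - α^2) * (∑ j ∈ Finset.Icc 1 M, pell j * α^(M-j) * β^(j-1))
      = pell M * β^(M+1) + pell (M+1) * α * β^M - α^(M+1)
  | 0 => by norm_num [pell]
  | (M+1) => by
      have ih := sumB α β M
      rw [Finset.sum_Icc_succ_top (by omega : 1 ≤ M+1)]
      have hs : ∑ j ∈ Finset.Icc 1 M, pell j * α^(M+1-j) * β^(j-1)
          = α * ∑ j ∈ Finset.Icc 1 M, pell j * α^(M-j) * β^(j-1) := by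
        rw [Finset.mul_sum]
        refine Finset.sum_congr rfl (fun j hj => ?_)
        simp only [Finset.mem_Icc] at hj
        rw [show M+1-j = (M-j)+1 by omega, pow_succ]
        ring
      rw [hs]
      have hr : pell (M+1+1) = 2 * pell (M+1) + pell M := pell_two_step M
      simp only [Nat.sub_self, Nat.add_sub_cancel, pow_zero, mul_one]
      linear_combination α * ih - (α*β^(M+1)) * hr

lemma sumA (α β : ℚ) (N : ℕ) : ∀ M : ℕ, M + 1 ≤ N →
    (α^2 - 2*α*β - β^2) * (∑ k ∈ Finset.Icc 1 M, pell (N-k) * α^(k-1) * β^(M-k))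
      = -pell (N-1) * β^(M+1) - pell N * α * β^M + pell (N-M-1) * α^M * β + pell (N-M) * α^(M+1)
  | 0, h => by norm_num; ring
  | (M+1), h => by
      have ih := sumA α β N M (by omega)
      rw [Finset.sum_Icc_succ_top (by omega : 1 ≤ M+1)]
      have hs : ∑ k ∈ Finset.Icc 1 M, pell (N-k) * α^(k-1) * β^(M+1-k)
          = β * ∑ k ∈ Finset.Icc 1 M, pell (N-k) * α^(k-1) * β^(M-k) := by
        rw [Finset.mul_sum]
        refine Finset.sum_congr rfl (fun k hk => ?_)
        simp only [Finset.mem_Icc] at hk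
        rw [show M+1-k = (M-k)+1 by omega, pow_succ]
        ring
      rw [hs]
      have h1 : N - (M+1) - 1 = N - M - 2 := by omega
      have h2 : N - (M+1) = N - M - 2 + 1 := by omega
      have h5 : pell (N-M-1) = pell (N-M-2+1) := congrArg pell (by omega)
      have h6 : pell (N-M) = pell (N-M-2+2) := congrArg pell (by omega)
      rw [h1, h2]
      rw [h5, h6] at ih
      have hr : pell (N-M-2+2) = 2 * pell (N-M-2+1) + pell (N-M-2) := pell_two_step _
      simp only [Nat.sub_self, Nat.add_sub_cancel, pow_zero, mul_one]
      linear_combination β * ih + (α^(M+1)*β) * hr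

def pellLucas : ℕ → ℚ
  | 0 => 2
  | 1 => 2
  | n + 2 => 2 * pellLucas (n + 1) + pellLucas n

/-- Circulant matrix `circ (c₁, …, cₙ)` with `(i,j)` entry `c ((j - i mod n) + 1)`. -/
def circMat (n : ℕ) (c : ℕ → ℚ) : Matrix (Fin n) (Fin n) ℚ :=
  fun i j => c ((j - i : Fin n).val + 1)

theorem circ_pell_inverse (n : ℕ) (hn : 3 ≤ n)
    (g : ℚ) (hg : g = pell 1 - 2 * pell n +
      ∑ k ∈ Finset.Icc 2 (n - 1), pell (k - 1) * (pell n / (pell 1 - pell (n + 1))) ^ (n - k))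
    (p : ℕ → ℚ)
    (hp1 : p 1 = (1 / g) * (1 + 2 * pell n ^ (n - 3) / (pell 1 - pell (n + 1)) ^ (n - 2) +
      ∑ k ∈ Finset.Icc 1 (n - 3), pell (n - k) * pell n ^ (k - 1) / (pell 1 - pell (n + 1)) ^ k))
    (hp2 : p 2 = (1 / g) * (-2 +
      ∑ k ∈ Finset.Icc 1 (n - 2), pell (n - k - 1) * pell n ^ (k - 1) / (pell 1 - pell (n + 1)) ^ k))
    (hpi : ∀ i, 3 ≤ i → i ≤ n →
      p i = -(pell n ^ (i - 3)) / (g * (pell 1 - pell (n + 1)) ^ (i - 2))) :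
    (circMat n pell)⁻¹ = circMat n p := by
  obtain ⟨m, rfl⟩ : ∃ m, n = m + 3 := ⟨n - 3, by omega⟩
  have e1 : pell 1 = 1 := rfl
  simp only [e1, show m+3+1 = m+4 from rfl, show m+3-1 = m+2 by omega,
    show m+3-2 = m+1 by omega, show m+3-3 = m by omega,
    show ∀ k : ℕ, m+3-k-1 = m+2-k from fun k => by omega] at hg hp1 hp2 hpi
  have hrec4 : pell (m+4) = 2 * pell (m+3) + pell (m+2) := pell_two_step (m+2)
  have hrec3 : pell (m+3) = 2 * pell (m+2) + pell (m+1) := pell_two_step (m+1)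
  have hpm2 : 1 ≤ pell (m+2) := pell_one_le (m+1)
  have hpm1 : 0 ≤ pell (m+1) := pell_nonneg (m+1)
  have hSA1 := sumA (pell (m+3)) (1 - pell (m+4)) (m+3) m (by omega)
  have hSA2 := sumA (pell (m+3)) (1 - pell (m+4)) (m+2) (m+1) (by omega)
  have hB := sumB (pell (m+3)) (1 - pell (m+4)) (m+1)
  have ep0 : pell 0 = 0 := rfl
  have ep2 : pell 2 = 2 := by norm_num [pell]
  have ep3 : pell 3 = 5 := by norm_num [pell]
  simp only [show m+1+1 = m+2 from rfl, show m+3-m-1 = 2 by omega, show m+3-m = 3 by omega,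
    show m+2-(m+1)-1 = 0 by omega, show m+2-(m+1) = 1 by omega, show m+2-1 = m+1 by omega,
    show m+3-1 = m+2 by omega, show (3:ℕ)-1 = 2 from rfl, show (1:ℕ)-1 = 0 from rfl,
    e1, ep0, ep2, ep3] at hSA1 hSA2 hB
  generalize hαd : pell (m+3) = α at hg hp1 hp2 hpi hrec4 hrec3 hSA1 hSA2 hB
  generalize hβd : (1:ℚ) - pell (m+4) = β at hg hp1 hp2 hpi hSA1 hSA2 hB
  have hγ : pell (m+4) = 1 - β := by linarith
  rw [hγ] at hrec4
  have hα1 : 1 ≤ α := by rw [← hαd]; exact pell_one_le (m+2)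
  have e2 : pell (m+2) = 1 - β - 2*α := by linarith
  have e3 : pell (m+1) = 5*α + 2*β - 2 := by linarith
  simp only [e2, e3] at hSA1 hSA2 hB
  have hβα : α + 1 ≤ -β := by linarith
  have hβ0 : β ≠ 0 := by intro h; rw [h] at hβα; linarith
  have hD0 : β^(m+3) - α^(m+3) ≠ 0 := by
    intro h
    have hba : β^(m+3) = α^(m+3) := by linarith
    have h1 : α^(m+3) < (-β)^(m+3) :=
      pow_lt_pow_left₀ (by linarith) (by linarith) (by omega)
    have h2 : (-β)^(m+3) = |β^(m+3)| := by
      rw [abs_pow, abs_of_neg (by linarith : β < 0)]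
    rw [hba, abs_of_pos (pow_pos (by linarith) _)] at h2
    linarith
  have hSg : (∑ k ∈ Finset.Icc 2 (m+2), pell (k-1) * (α/β)^(m+3-k))
      = α * (∑ j ∈ Finset.Icc 1 (m+1), pell j * α^(m+1-j) * β^(j-1)) / β^(m+1) := by
    rw [show (2:ℕ) = 1+1 from rfl, show m+2 = (m+1)+1 from rfl,
      ← Finset.map_add_right_Icc, Finset.sum_map, Finset.mul_sum, Finset.sum_div]
    refine Finset.sum_congr rfl fun j hj => ?_
    simp only [Finset.mem_Icc] at hj
    simp only [addRightEmbedding_apply]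
    obtain ⟨s, hsj⟩ : ∃ s, m + 1 = j + s := ⟨m+1-j, by omega⟩
    rw [show j+1-1 = j by omega, show m+1+1+1-(j+1) = s+1 by omega,
      show m+1-j = s by omega, div_pow, hsj,
      show β^(j+s) = β^(j-1) * β^(s+1) by
        rw [← pow_add, show j-1+(s+1) = j+s by omega]]
    field_simp
    ring
  have hconv1 : (∑ x ∈ Finset.Icc 1 m, pell (m+3-x) * α^(x-1) / β^x)
      = (∑ k ∈ Finset.Icc 1 m, pell (m+3-k) * α^(k-1) * β^(m-k)) / β^m := by
    rw [Finset.sum_div]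
    refine Finset.sum_congr rfl fun k hk => ?_
    simp only [Finset.mem_Icc] at hk
    rw [show β^m = β^(m-k) * β^k by rw [← pow_add]; congr 1; omega]
    rw [div_eq_div_iff (pow_ne_zero _ hβ0) (mul_ne_zero (pow_ne_zero _ hβ0) (pow_ne_zero _ hβ0))]
    ring
  have hconv2 : (∑ x ∈ Finset.Icc 1 (m+1), pell (m+2-x) * α^(x-1) / β^x)
      = (∑ k ∈ Finset.Icc 1 (m+1), pell (m+2-k) * α^(k-1) * β^(m+1-k)) / β^(m+1) := by
    rw [Finset.sum_div]
    refine Finset.sum_congr rfl fun k hk => ?_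
    simp only [Finset.mem_Icc] at hk
    rw [show β^(m+1) = β^(m+1-k) * β^k by rw [← pow_add]; congr 1; omega]
    rw [div_eq_div_iff (pow_ne_zero _ hβ0) (mul_ne_zero (pow_ne_zero _ hβ0) (pow_ne_zero _ hβ0))]
    ring
  rw [hconv1] at hp1
  rw [hconv2] at hp2
  rw [hSg] at hg
  generalize hA1d : (∑ k ∈ Finset.Icc 1 m, pell (m+3-k) * α^(k-1) * β^(m-k)) = A1 at hp1 hSA1
  generalize hA2d : (∑ k ∈ Finset.Icc 1 (m+1), pell (m+2-k) * α^(k-1) * β^(m+1-k)) = A2 at hp2 hSA2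
  generalize hBd : (∑ j ∈ Finset.Icc 1 (m+1), pell j * α^(m+1-j) * β^(j-1)) = B at hg hB
  have hgF : g * (β^(m+1) * (β^2 + 2*α*β - α^2)) = β^(m+3) - α^(m+3) := by
    rw [hg]
    have key : (1 - 2*α + α * B / β^(m+1)) * (β^(m+1)*(β^2+2*α*β-α^2))
        = (1-2*α)*β^(m+1)*(β^2+2*α*β-α^2) + α*((β^2+2*α*β-α^2)*B) := by
      field_simp
    rw [key, hB]; ring
  have hg0 : g ≠ 0 := by
    intro h; rw [h, zero_mul] at hgF; exact hD0 hgF.symm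
  have hF0 : (β^2 + 2*α*β - α^2) ≠ 0 := by
    intro h; rw [h, mul_zero, mul_zero] at hgF; exact hD0 hgF.symm
  have hgval : g = (β^(m+3)-α^(m+3)) / (β^(m+1)*(β^2+2*α*β-α^2)) := by
    rw [eq_div_iff (mul_ne_zero (pow_ne_zero _ hβ0) hF0)]; exact hgF
  have hE0 : (α^2 - 2*α*β - β^2) ≠ 0 := fun h => hF0 (by linear_combination -h)
  have hA1val : A1 = (-(1 - β - 2*α) * β^(m+1) - α * α * β^m + 2*α^m*β + 5*α^(m+1))
      / (α^2 - 2*α*β - β^2) := by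
    rw [eq_div_iff hE0]; linear_combination hSA1
  have hA2val : A2 = (-(5*α + 2*β - 2) * β^(m+2) - (1 - β - 2*α) * α * β^(m+1)
      + 0 * α^(m+1) * β + 1 * α^(m+2)) / (α^2 - 2*α*β - β^2) := by
    rw [eq_div_iff hE0]; linear_combination hSA2
  obtain ⟨C, hC⟩ : ∃ C : Fin (m+3) → ℚ,
      ∀ k, C k = -β^(m+2-k.val) * α^(k.val) / (β^(m+3) - α^(m+3)) := ⟨_, fun k => rfl⟩
  have hsub : ∀ x y : Fin (m+3), (x - y).val = (m+3 - y.val + x.val) % (m+3) := fun x y => by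
    rw [Fin.sub_def]
  have h2v : ((2 : Fin (m+3)) : ℕ) = 2 := rfl
  have h1v : ((1 : Fin (m+3)) : ℕ) = 1 := rfl
  have hstep : ∀ k : Fin (m+3), p (k.val + 1) = C (k-2) + 2*C (k-1) - C k := by
    intro k
    have hk3 : (k:ℕ) < m+3 := k.isLt
    by_cases hk0 : (k:ℕ) = 0
    · have hv2 : ((k-2 : Fin (m+3)) : ℕ) = m+1 := by
        rw [hsub, h2v, hk0, show m+3-2+0 = m+1 by omega, Nat.mod_eq_of_lt (by omega)]
      have hv1 : ((k-1 : Fin (m+3)) : ℕ) = m+2 := by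
        rw [hsub, h1v, hk0, show m+3-1+0 = m+2 by omega, Nat.mod_eq_of_lt (by omega)]
      rw [hC, hC, hC, hv2, hv1, hk0]
      simp only [show m+2-(m+1) = 1 by omega, Nat.sub_self, Nat.sub_zero, pow_zero, pow_one,
        mul_one, show (0:ℕ)+1 = 1 from rfl]
      rw [hp1, hgval, hA1val]
      field_simp [(show α*(α-β*2)-β^2 ≠ 0 from fun h => hE0 (by linear_combination h))]
      ring
    · by_cases hk1 : (k:ℕ) = 1
      · have hv2 : ((k-2 : Fin (m+3)) : ℕ) = m+2 := by
          rw [hsub, h2v, hk1, show m+3-2+1 = m+2 by omega, Nat.mod_eq_of_lt (by omega)]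
        have hv1 : ((k-1 : Fin (m+3)) : ℕ) = 0 := by
          rw [hsub, h1v, hk1, show m+3-1+1 = m+3 by omega, Nat.mod_self]
        rw [hC, hC, hC, hv2, hv1, hk1]
        simp only [Nat.sub_self, Nat.sub_zero, pow_zero, pow_one, mul_one,
          show (1:ℕ)+1 = 2 from rfl]
        rw [hp2, hgval, hA2val]
        field_simp [(show α*(α-β*2)-β^2 ≠ 0 from fun h => hE0 (by linear_combination h))]
        ring_nf
        simp only [show 2+m-1 = m+1 by omega]
        ring
      · obtain ⟨t, htv⟩ : ∃ t, (k:ℕ) = t+2 := ⟨(k:ℕ) - 2, by omega⟩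
        have htm : t ≤ m := by omega
        have hv2 : ((k-2 : Fin (m+3)) : ℕ) = t := by
          rw [hsub, h2v, htv, show m+3-2+(t+2) = t+(m+3) by omega, Nat.add_mod_right,
            Nat.mod_eq_of_lt (by omega)]
        have hv1 : ((k-1 : Fin (m+3)) : ℕ) = t+1 := by
          rw [hsub, h1v, htv, show m+3-1+(t+2) = (t+1)+(m+3) by omega, Nat.add_mod_right,
            Nat.mod_eq_of_lt (by omega)]
        rw [hC, hC, hC, hv2, hv1, htv]
        rw [hpi (t+2+1) (by omega) (by omega)]
        simp only [show t+2+1-3 = t by omega, show t+2+1-2 = t+1 by omega,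
          show m+2-t = (m-t)+2 by omega, show m+2-(t+1) = (m-t)+1 by omega,
          show m+2-(t+2) = m-t by omega]
        rw [hgval, show β^(m+1) = β^(m-t) * β^(t+1) by rw [← pow_add]; congr 1; omega]
        field_simp
        ring
  apply Matrix.inv_eq_right_inv
  ext i j
  rw [Matrix.mul_apply, Matrix.one_apply]
  simp only [circMat]
  have hre : (∑ k : Fin (m+3), pell ((k - i).val + 1) * p ((j - k).val + 1))
      = ∑ k : Fin (m+3), pell (k.val + 1) * p ((j - i - k).val + 1) := by
    refine (Fintype.sum_equiv (Equiv.addLeft i) _ _ fun x => ?_).symm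
    simp only [Equiv.coe_addLeft]
    rw [add_sub_cancel_left, sub_add_eq_sub_sub]
  rw [hre]
  have h1 : (∑ k : Fin (m+3), pell (k.val + 1) * p ((j - i - k).val + 1))
      = ∑ k : Fin (m+3), (pell (k.val+1) * C (j-i-k-2) + 2*(pell (k.val+1) * C (j-i-k-1))
          - pell (k.val+1) * C (j-i-k)) := by
    refine Finset.sum_congr rfl fun k _ => ?_
    rw [hstep (j-i-k)]
    ring
  rw [h1, Finset.sum_sub_distrib, Finset.sum_add_distrib]
  have r2 : (∑ k : Fin (m+3), pell (k.val+1) * C (j-i-k-2))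
      = ∑ k : Fin (m+3), pell ((k-2 : Fin (m+3)).val+1) * C (j-i-k) := by
    refine Fintype.sum_equiv (Equiv.addRight (2 : Fin (m+3))) _ _ fun x => ?_
    simp only [Equiv.coe_addRight]
    rw [add_sub_cancel_right, sub_add_eq_sub_sub]
  have r1 : (∑ k : Fin (m+3), 2*(pell (k.val+1) * C (j-i-k-1)))
      = ∑ k : Fin (m+3), 2*(pell ((k-1 : Fin (m+3)).val+1) * C (j-i-k)) := by
    refine Fintype.sum_equiv (Equiv.addRight (1 : Fin (m+3))) _ _ fun x => ?_
    simp only [Equiv.coe_addRight]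
    rw [add_sub_cancel_right, sub_add_eq_sub_sub]
  rw [r2, r1, ← Finset.sum_add_distrib, ← Finset.sum_sub_distrib]
  have hW : ∀ k : Fin (m+3),
      (pell ((k-2 : Fin (m+3)).val+1) * C (j-i-k) + 2*(pell ((k-1 : Fin (m+3)).val+1) * C (j-i-k))
        - pell (k.val+1) * C (j-i-k))
      = (if k = 0 then -β * C (j-i-k) else 0) + (if k = 1 then α * C (j-i-k) else 0) := by
    intro k
    have hk3 : (k:ℕ) < m+3 := k.isLt
    by_cases hk0 : k = 0
    · subst hk0
      have hv2 : ((0-2 : Fin (m+3)) : ℕ) = m+1 := by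
        rw [hsub, h2v, Fin.val_zero, show m+3-2+0 = m+1 by omega, Nat.mod_eq_of_lt (by omega)]
      have hv1 : ((0-1 : Fin (m+3)) : ℕ) = m+2 := by
        rw [hsub, h1v, Fin.val_zero, show m+3-1+0 = m+2 by omega, Nat.mod_eq_of_lt (by omega)]
      rw [hv2, hv1, if_pos rfl,
        if_neg (show (0 : Fin (m+3)) ≠ 1 from fun h => by simpa using congrArg Fin.val h)]
      simp only [Fin.val_zero, show (0:ℕ)+1 = 1 from rfl, show m+1+1 = m+2 from rfl,
        show m+2+1 = m+3 from rfl, e1, e2, hαd]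
      ring
    · by_cases hk1 : k = 1
      · subst hk1
        have hv2 : ((1-2 : Fin (m+3)) : ℕ) = m+2 := by
          rw [hsub, h2v, h1v, show m+3-2+1 = m+2 by omega, Nat.mod_eq_of_lt (by omega)]
        have hv1 : ((1-1 : Fin (m+3)) : ℕ) = 0 := by
          rw [hsub, h1v, show m+3-1+1 = m+3 by omega, Nat.mod_self]
        rw [hv2, hv1, if_pos rfl,
          if_neg (show (1 : Fin (m+3)) ≠ 0 from fun h => by simpa using congrArg Fin.val h)]
        simp only [h1v, show (0:ℕ)+1 = 1 from rfl, show (1:ℕ)+1 = 2 from rfl,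
          show m+2+1 = m+3 from rfl, e1, ep2, hαd]
        ring
      · have hk0' : (k:ℕ) ≠ 0 := fun h => hk0 (Fin.ext (by simpa using h))
        have hk1' : (k:ℕ) ≠ 1 := fun h => hk1 (Fin.ext (by simpa using h))
        obtain ⟨t, htv⟩ : ∃ t, (k:ℕ) = t+2 := ⟨(k:ℕ) - 2, by omega⟩
        have hv2 : ((k-2 : Fin (m+3)) : ℕ) = t := by
          rw [hsub, h2v, htv, show m+3-2+(t+2) = t+(m+3) by omega, Nat.add_mod_right,
            Nat.mod_eq_of_lt (by omega)]
        have hv1 : ((k-1 : Fin (m+3)) : ℕ) = t+1 := by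
          rw [hsub, h1v, htv, show m+3-1+(t+2) = (t+1)+(m+3) by omega, Nat.add_mod_right,
            Nat.mod_eq_of_lt (by omega)]
        rw [hv2, hv1, htv, if_neg hk0, if_neg hk1]
        have hr : pell (t+2+1) = 2 * pell (t+1+1) + pell (t+1) := pell_two_step (t+1)
        linear_combination (-(C (j-i-k))) * hr
  simp only [hW]
  rw [Finset.sum_add_distrib, Finset.sum_ite_eq' Finset.univ (0 : Fin (m+3)),
    Finset.sum_ite_eq' Finset.univ (1 : Fin (m+3))]
  simp only [Finset.mem_univ, if_true, sub_zero]
  by_cases hij : i = j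
  · subst hij
    rw [if_pos rfl, sub_self]
    have hv1 : ((0-1 : Fin (m+3)) : ℕ) = m+2 := by
      rw [hsub, h1v, Fin.val_zero, show m+3-1+0 = m+2 by omega, Nat.mod_eq_of_lt (by omega)]
    rw [hC, hC, hv1, Fin.val_zero]
    simp only [Nat.sub_self, Nat.sub_zero, pow_zero, mul_one]
    field_simp
    ring
  · rw [if_neg hij]
    have hd0 : (j - i : Fin (m+3)) ≠ 0 := fun h => hij (sub_eq_zero.mp h).symm
    have hdv : ((j - i : Fin (m+3)) : ℕ) ≠ 0 := fun h => hd0 (Fin.ext (by simpa using h))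
    obtain ⟨s, hs⟩ : ∃ s, ((j - i : Fin (m+3)) : ℕ) = s+1 := ⟨((j-i : Fin (m+3)):ℕ) - 1, by omega⟩
    have hsm : s ≤ m+1 := by have := (j-i : Fin (m+3)).isLt; omega
    have hv1 : ((j - i - 1 : Fin (m+3)) : ℕ) = s := by
      rw [hsub, h1v, hs, show m+3-1+(s+1) = s+(m+3) by omega, Nat.add_mod_right,
        Nat.mod_eq_of_lt (by omega)]
    rw [hC, hC, hv1, hs]
    rw [show m+2-(s+1) = m+1-s by omega, show m+2-s = (m+1-s)+1 by omega]
    field_simp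
    ring
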